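/- arXiv:2110.11625 — 6 statements merged into one kernel-verified Lean document; each statement's English description precedes it below -/
import Mathlib

section
/- Let 0 < γ < β. For each i ∈ [0, i*] with i* ∈ (0,1), the equation -x + (γ/β) log x = i - i* + (γ/β) log(γ/β) - γ/β has exactly one solution x = φ(i) satisfying x ≥ γ/β. -/
open Set

theorem aux_strictAntiOn (c : ℝ) (hc0 : 0 < c) :
    StrictAntiOn (fun x : ℝ => -x + c * Real.log x) (Ici c) := by
  apply strictAntiOn_of_deriv_neg (convex_Ici c)
  · apply ContinuousOn.add (continuousOn_id.neg)
    exact continuousOn_const.mul (Real.continuousOn_log.mono (fun x hx => by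
      simp only [mem_compl_iff, mem_singleton_iff]
      exact ne_of_gt (lt_of_lt_of_le hc0 hx)))
  · intro x hx
    rw [interior_Ici] at hx
    have hx0 : 0 < x := hc0.trans hx
    have hd : HasDerivAt (fun x : ℝ => -x + c * Real.log x) (-1 + c * x⁻¹) x := by
      exact (hasDerivAt_id x).neg.add ((Real.hasDerivAt_log hx0.ne').const_mul c)
    rw [hd.deriv]
    have : c * x⁻¹ < 1 := by
      rw [mul_inv_lt_iff₀ hx0, one_mul]
      exact hx
    linarith

/-- for `0 < γ < β` and `i ∈ [0, i*]`, the equation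
`-x + (γ/β) log x = i - i* + (γ/β) log(γ/β) - γ/β` has exactly one solution
`x ≥ γ/β`. -/
theorem green_zone_unique_solution
    (β γ istar : ℝ) (hγ : 0 < γ) (hγβ : γ < β) (histar : istar ∈ Ioo (0:ℝ) 1) :
    ∀ iv ∈ Icc (0:ℝ) istar,
      ∃! x : ℝ, γ / β ≤ x ∧
        -x + (γ / β) * Real.log x
          = iv - istar + (γ / β) * Real.log (γ / β) - γ / β := by
  intro iv hiv
  set c : ℝ := γ / β with hc
  have hβ : 0 < β := hγ.trans hγβ
  have hc0 : 0 < c := div_pos hγ hβ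
  have hc1 : c < 1 := (div_lt_one hβ).mpr hγβ
  set g : ℝ → ℝ := fun x => -x + c * Real.log x with hg
  set T : ℝ := iv - istar + c * Real.log c - c with hT
  have hanti : StrictAntiOn g (Ici c) := aux_strictAntiOn c hc0
  have hgc : T ≤ g c := by
    have : iv - istar ≤ 0 := by linarith [hiv.2]
    simp only [hg, hT]
    linarith
  -- choose M large
  set M : ℝ := max (c + 1) ((T + c) / (c - 1)) with hM
  have hcM : c ≤ M := le_trans (by linarith) (le_max_left _ _)
  have hM0 : 0 < M := hc0.trans_le hcM
  have hgM : g M ≤ T := by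
    have hlog : Real.log M ≤ M - 1 := Real.log_le_sub_one_of_pos hM0
    have h1 : g M ≤ -M + c * (M - 1) := by
      simp only [hg]
      nlinarith
    have h2 : (T + c) / (c - 1) ≤ M := le_max_right _ _
    have h3 : (c - 1) * M ≤ T + c := by
      have := mul_le_mul_of_nonpos_left h2 (by linarith : c - 1 ≤ 0)
      calc (c - 1) * M ≤ (c - 1) * ((T + c) / (c - 1)) := this
        _ = T + c := by
          have hne : c - 1 ≠ 0 := sub_ne_zero.mpr hc1.ne
          field_simp
    linarith
  have hcont : ContinuousOn g (Icc c M) := by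
    apply ContinuousOn.add (continuousOn_id.neg)
    exact continuousOn_const.mul (Real.continuousOn_log.mono (fun x hx => by
      simp only [mem_compl_iff, mem_singleton_iff]
      exact ne_of_gt (lt_of_lt_of_le hc0 hx.1)))
  have hiv' : T ∈ Icc (g M) (g c) := ⟨hgM, hgc⟩
  obtain ⟨x, hx, hgx⟩ := intermediate_value_Icc' hcM hcont hiv'
  refine ⟨x, ⟨hx.1, by simpa [hg, hT] using hgx⟩, ?_⟩
  rintro y ⟨hy1, hy2⟩
  have hgy : g y = T := by simpa [hg, hT] using hy2
  exact hanti.injOn hy1 (mem_Ici.mpr hx.1) (by rw [hgy, hgx])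
end

section
/- Let 0 < γ < β(1-ā) with ā ∈ (0,1), and let ψ(i) for i ∈ (0, i*] be the unique solution x ≥ γ/(β(1-ā)) of -x + (γ/(β(1-ā))) log x = i - i* + (γ/(β(1-ā))) log(γ/(β(1-ā))) - γ/(β(1-ā)). Then ψ is strictly decreasing in i, ψ(i*) = γ/(β(1-ā)), and ψ'(i) = β(1-ā)ψ(i) / (γ - β(1-ā)ψ(i)) for i ∈ (0, i*). -/
open Set

/-- the yellow-zone boundary function `ψ` is strictly decreasing,
`ψ(i*) = γ/(β(1-ā))`, and satisfies the stated ODE on `(0, i*)`. -/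
theorem psi_properties
    (β γ abar istar : ℝ) (hγ : 0 < γ) (habar : abar ∈ Ioo (0:ℝ) 1)
    (hcond : γ < β * (1 - abar)) (histar : istar ∈ Ioo (0:ℝ) 1)
    (ψ : ℝ → ℝ)
    (hψ : ∀ iv ∈ Ioc (0:ℝ) istar,
      γ / (β * (1 - abar)) ≤ ψ iv ∧
      -ψ iv + (γ / (β * (1 - abar))) * Real.log (ψ iv)
        = iv - istar + (γ / (β * (1 - abar))) * Real.log (γ / (β * (1 - abar)))
            - γ / (β * (1 - abar))) :
    StrictAntiOn ψ (Ioc (0:ℝ) istar) ∧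
    ψ istar = γ / (β * (1 - abar)) ∧
    ∀ iv ∈ Ioo (0:ℝ) istar,
      HasDerivAt ψ (β * (1 - abar) * ψ iv / (γ - β * (1 - abar) * ψ iv)) iv := by
  have hB : (0:ℝ) < β * (1 - abar) := lt_trans hγ hcond
  set c : ℝ := γ / (β * (1 - abar)) with hc_def
  have hc : 0 < c := div_pos hγ hB
  set F : ℝ → ℝ := fun x => -x + c * Real.log x with hF_def
  -- derivative of F
  have hFd : ∀ x : ℝ, 0 < x → HasDerivAt F (-1 + c * x⁻¹) x := by
    intro x hx
    have h1 : HasDerivAt (fun y : ℝ => -y) (-1) x := (hasDerivAt_id x).neg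
    have h2 : HasDerivAt (fun y : ℝ => c * Real.log y) (c * x⁻¹) x :=
      (Real.hasDerivAt_log hx.ne').const_mul c
    exact h1.add h2
  -- F is strictly antitone on Ici c
  have hFanti : StrictAntiOn F (Ici c) := by
    apply strictAntiOn_of_deriv_neg (convex_Ici c)
    · intro x hx
      exact (hFd x (lt_of_lt_of_le hc hx)).continuousAt.continuousWithinAt
    · intro x hx
      rw [interior_Ici] at hx
      have hx0 : 0 < x := lt_trans hc hx
      rw [(hFd x hx0).deriv]
      have : c * x⁻¹ < 1 := by
        rw [mul_inv_lt_iff₀ hx0, one_mul]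
        exact hx
      linarith
  -- rewritten hypothesis: F (ψ x) = x - istar + F c
  have hψ' : ∀ iv ∈ Ioc (0:ℝ) istar, F (ψ iv) = iv - istar + F c := by
    intro iv hiv
    have := (hψ iv hiv).2
    simp only [hF_def]
    linarith
  have hψge : ∀ iv ∈ Ioc (0:ℝ) istar, c ≤ ψ iv := fun iv hiv => (hψ iv hiv).1
  -- strict antitonicity of ψ
  have hanti : StrictAntiOn ψ (Ioc (0:ℝ) istar) := by
    intro x hx y hy hxy
    have hFx : F (ψ x) = x - istar + F c := hψ' x hx
    have hFy : F (ψ y) = y - istar + F c := hψ' y hy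
    have hlt : F (ψ x) < F (ψ y) := by rw [hFx, hFy]; linarith
    by_contra h
    push_neg at h
    rcases eq_or_lt_of_le h with heq | hltp
    · rw [heq] at hlt; exact lt_irrefl _ hlt
    · have := hFanti (hψge x hx) (hψge y hy) hltp
      linarith
  -- value at istar
  have histar_mem : istar ∈ Ioc (0:ℝ) istar := ⟨histar.1, le_refl _⟩
  have hval : ψ istar = c := by
    have h1 : F (ψ istar) = F c := by rw [hψ' istar histar_mem]; ring
    have h2 := hFanti.injOn (hψge istar histar_mem) (self_mem_Ici) h1
    exact h2
  refine ⟨hanti, hval, ?_⟩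
  -- derivative
  intro iv hiv
  have hivmem : iv ∈ Ioc (0:ℝ) istar := ⟨hiv.1, le_of_lt hiv.2⟩
  have hgt : c < ψ iv := by
    have := hanti hivmem histar_mem hiv.2
    rw [hval] at this; exact this
  have hψpos : 0 < ψ iv := lt_trans hc hgt
  -- continuity of ψ at iv
  have hcont : ContinuousAt ψ iv := by
    rw [Metric.continuousAt_iff]
    intro ε hε
    set ε' : ℝ := min ε ((ψ iv - c) / 2) with hε'_def
    have hε'pos : 0 < ε' := lt_min hε (by linarith)
    have hε'le : ε' ≤ ε := min_le_left _ _
    have hε'le2 : ε' ≤ (ψ iv - c) / 2 := min_le_right _ _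
    set y1 : ℝ := ψ iv + ε' with hy1
    set y2 : ℝ := ψ iv - ε' with hy2
    have hy2c : c < y2 := by simp only [hy2]; linarith
    have hy1mem : y1 ∈ Ici c := by simp only [hy1, mem_Ici]; linarith
    have hy2mem : y2 ∈ Ici c := mem_Ici.mpr (le_of_lt hy2c)
    have hψmem : ψ iv ∈ Ici c := mem_Ici.mpr (le_of_lt hgt)
    have hF1 : F y1 < F (ψ iv) := hFanti hψmem hy1mem (by simp only [hy1]; linarith)
    have hF2 : F (ψ iv) < F y2 := hFanti hy2mem hψmem (by simp only [hy2]; linarith)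
    refine ⟨min (min (F (ψ iv) - F y1) (F y2 - F (ψ iv))) (min iv (istar - iv)), ?_, ?_⟩
    · apply lt_min (lt_min (by linarith) (by linarith)) (lt_min hiv.1 (by linarith [hiv.2]))
    · intro x hx
      rw [Real.dist_eq] at hx ⊢
      have hx1 : |x - iv| < min (F (ψ iv) - F y1) (F y2 - F (ψ iv)) :=
        lt_of_lt_of_le hx (min_le_left _ _)
      have hx2 : |x - iv| < min iv (istar - iv) := lt_of_lt_of_le hx (min_le_right _ _)
      rw [abs_lt] at hx1 hx2
      have hxmem : x ∈ Ioc (0:ℝ) istar := by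
        have h1 := hx2.1
        have h2 := hx2.2
        have h3 := min_le_left iv (istar - iv)
        have h4 := min_le_right iv (istar - iv)
        constructor <;> [skip; skip] <;> nlinarith
      have hFx : F (ψ x) = F (ψ iv) + (x - iv) := by
        rw [hψ' x hxmem, hψ' iv hivmem]; ring
      have hb1 : F y1 < F (ψ x) := by
        rw [hFx]
        have h1 := hx1.1
        have h3 := min_le_left (F (ψ iv) - F y1) (F y2 - F (ψ iv))
        linarith
      have hb2 : F (ψ x) < F y2 := by
        rw [hFx]
        have h2 := hx1.2
        have h4 := min_le_right (F (ψ iv) - F y1) (F y2 - F (ψ iv))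
        linarith
      have hxgec : c ≤ ψ x := hψge x hxmem
      -- ψ x < y1
      have hlt1 : ψ x < y1 := by
        by_contra h
        push_neg at h
        rcases eq_or_lt_of_le h with heq | hl
        · rw [heq] at hb1; exact lt_irrefl _ hb1
        · have := hFanti hy1mem (mem_Ici.mpr hxgec) hl; linarith
      have hlt2 : y2 < ψ x := by
        by_contra h
        push_neg at h
        rcases eq_or_lt_of_le h with heq | hl
        · rw [heq] at hb2; exact lt_irrefl _ hb2
        · have := hFanti (mem_Ici.mpr hxgec) hy2mem hl; linarith
      have : |ψ x - ψ iv| < ε' := by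
        rw [abs_lt]; constructor <;> simp only [hy1, hy2] at hlt1 hlt2 <;> linarith
      exact lt_of_lt_of_le this hε'le
  -- inverse function theorem
  set f : ℝ → ℝ := fun y => F y - F c + istar with hf_def
  have hfd : HasDerivAt f (-1 + c * (ψ iv)⁻¹) (ψ iv) :=
    ((hFd (ψ iv) hψpos).sub_const (F c)).add_const istar
  have hf'neg : -1 + c * (ψ iv)⁻¹ < 0 := by
    have : c * (ψ iv)⁻¹ < 1 := by
      rw [mul_inv_lt_iff₀ hψpos, one_mul]; exact hgt
    linarith
  have hf'ne : -1 + c * (ψ iv)⁻¹ ≠ 0 := ne_of_lt hf'neg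
  have hev : ∀ᶠ x in nhds iv, f (ψ x) = x := by
    filter_upwards [isOpen_Ioo.mem_nhds hiv] with x hx
    have hxmem : x ∈ Ioc (0:ℝ) istar := ⟨hx.1, le_of_lt hx.2⟩
    simp only [hf_def]
    rw [hψ' x hxmem]; ring
  have hmain : HasDerivAt ψ (-1 + c * (ψ iv)⁻¹)⁻¹ iv :=
    HasDerivAt.of_local_left_inverse hcont hfd hf'ne hev
  convert hmain using 1
  have hne : γ - β * (1 - abar) * ψ iv ≠ 0 := by
    have : c < ψ iv := hgt
    rw [hc_def, div_lt_iff₀ hB] at this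
    intro h
    nlinarith
  have hBc : β * (1 - abar) * c = γ := by rw [hc_def]; field_simp; exact div_self (ne_of_gt hB)
  have hden : γ - β * (1 - abar) * ψ iv = β * (1 - abar) * (c - ψ iv) := by
    rw [← hBc]; ring
  rw [hden, mul_div_mul_left _ _ (ne_of_gt hB)]
  rw [show -1 + c * (ψ iv)⁻¹ = (c - ψ iv) / ψ iv from by field_simp; ring]
  rw [inv_div]
end

section
/- For (s₀, i₀) in the yellow zone with s₀ > 0, i₀ > 0, the quantity s₁ = s₁(s₀, i₀) > γ/β defined implicitly by s₁ - s₀ - i₀ + i* - (γ/β) log(s₁/s₀) = 0 is a differentiable function of (s₀, i₀) with partial derivatives ∂s₁/∂s₀ = ((βs₀ - γ)s₁)/((βs₁ - γ)s₀) and ∂s₁/∂i₀ = βs₁/(βs₁ - γ). -/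
open Set Filter

private lemma gfun_strictMonoOn (c : ℝ) (hc : 0 < c) :
    StrictMonoOn (fun x : ℝ => x - c * Real.log x) (Ici c) := by
  apply strictMonoOn_of_deriv_pos (convex_Ici c)
  · exact continuousOn_id.sub (continuousOn_const.mul
      (Real.continuousOn_log.mono (fun x hx => ne_of_gt (lt_of_lt_of_le hc hx))))
  · intro x hx
    rw [interior_Ici] at hx
    have hx0 : (0:ℝ) < x := lt_trans hc hx
    have hd : HasDerivAt (fun x : ℝ => x - c * Real.log x) (1 - c * x⁻¹) x :=
      (hasDerivAt_id x).sub ((Real.hasDerivAt_log (ne_of_gt hx0)).const_mul c)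
    rw [hd.deriv]
    have h1 : c * x⁻¹ < 1 := by
      have := (div_lt_one hx0).mpr hx
      rwa [div_eq_mul_inv] at this
    linarith

private lemma inverse_exists (c : ℝ) (hc : 0 < c) (M : ℝ) (hM : c < M) :
    ∃ G : ℝ → ℝ, Continuous G ∧
      HasDerivAt G (1 - c * M⁻¹)⁻¹ (M - c * Real.log M) ∧
      ∀ s ∈ Ioc c (M + 1), G (s - c * Real.log s) = s := by
  have hMpos : 0 < M := lt_trans hc hM
  have hcM : c ≤ M + 1 := by linarith
  set clamp : ℝ → ℝ := fun x => min (max x c) (M + 1) with hclampdef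
  have hclamp_mem : ∀ x, clamp x ∈ Icc c (M + 1) := by
    intro x
    constructor
    · exact le_min (le_max_right x c) hcM
    · exact min_le_right _ _
  have hclamp_id : ∀ x ∈ Icc c (M + 1), clamp x = x := by
    intro x hx
    simp only [hclampdef]
    rw [max_eq_left hx.1, min_eq_left hx.2]
  have hclamp_mono : Monotone clamp :=
    (monotone_id.max monotone_const).min monotone_const
  set g : ℝ → ℝ := fun x => x - c * Real.log (clamp x) with hgdef
  have hsplit : ∀ z, g z = (z - clamp z) + (clamp z - c * Real.log (clamp z)) := by
    intro z; simp only [hgdef]; ring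
  have hlip : ∀ x y : ℝ, x ≤ y → clamp y - clamp x ≤ y - x := by
    intro x y hxy
    simp only [hclampdef, max_def, min_def]
    split_ifs <;> linarith
  have hsm : StrictMono g := by
    intro x y hxy
    have h1 : clamp x ≤ clamp y := hclamp_mono hxy.le
    rcases h1.lt_or_eq with h | h
    · rw [hsplit x, hsplit y]
      have h2 : (x - clamp x) ≤ (y - clamp y) := by
        have := hlip x y hxy.le; linarith
      have h3 : clamp x - c * Real.log (clamp x) < clamp y - c * Real.log (clamp y) :=
        gfun_strictMonoOn c hc (hclamp_mem x).1 (hclamp_mem y).1 h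
      exact add_lt_add_of_le_of_lt h2 h3
    · rw [hsplit x, hsplit y, h]
      have : x - clamp y < y - clamp y := by linarith
      linarith
  have hcont : Continuous g := by
    have hcl : Continuous clamp := (continuous_id.max continuous_const).min continuous_const
    have hlog : Continuous fun x => Real.log (clamp x) := by
      rw [continuous_iff_continuousAt]
      intro x
      exact (Real.continuousAt_log (ne_of_gt (lt_of_lt_of_le hc (hclamp_mem x).1))).comp
        hcl.continuousAt
    exact continuous_id.sub (continuous_const.mul hlog)
  have hsurj : Function.Surjective g := by
    apply Continuous.surjective hcont
    · apply Tendsto.congr' _ (tendsto_atTop_add_const_right _ (-(c * Real.log (M + 1))) tendsto_id)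
      filter_upwards [eventually_ge_atTop (M + 1)] with x hx
      have : clamp x = M + 1 := by
        simp only [hclampdef]
        rw [max_eq_left (le_trans hcM hx), min_eq_right hx]
      simp only [hgdef, this, id_eq]
      ring
    · apply Tendsto.congr' _ (tendsto_atBot_add_const_right _ (-(c * Real.log c)) tendsto_id)
      filter_upwards [eventually_le_atBot c] with x hx
      have : clamp x = c := by
        simp only [hclampdef]
        rw [max_eq_right hx, min_eq_left hcM]
      simp only [hgdef, this, id_eq]
      ring
  set e := StrictMono.orderIsoOfSurjective g hsm hsurj with hedef
  refine ⟨fun y => e.symm y, e.symm.continuous, ?_, ?_⟩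
  · have hMg : g M = M - c * Real.log M := by
      simp only [hgdef, hclamp_id M ⟨hM.le, by linarith⟩]
    have hGa : e.symm (M - c * Real.log M) = M := by
      rw [← hMg]; exact StrictMono.orderIsoOfSurjective_symm_apply_self g hsm hsurj M
    have hd : HasDerivAt (fun x : ℝ => x - c * Real.log x) (1 - c * M⁻¹) M :=
      (hasDerivAt_id M).sub ((Real.hasDerivAt_log (ne_of_gt hMpos)).const_mul c)
    have hEq : g =ᶠ[nhds M] fun x : ℝ => x - c * Real.log x := by
      have : Ioo c (M + 1) ∈ nhds M := Ioo_mem_nhds hM (by linarith)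
      filter_upwards [this] with x hx
      simp only [hgdef, hclamp_id x ⟨hx.1.le, hx.2.le⟩]
    have hdg : HasDerivAt g (1 - c * M⁻¹) (e.symm (M - c * Real.log M)) := by
      rw [hGa]; exact hd.congr_of_eventuallyEq hEq
    have hne : (1 - c * M⁻¹) ≠ 0 := by
      have h1 : c * M⁻¹ < 1 := by
        have := (div_lt_one hMpos).mpr hM
        rwa [div_eq_mul_inv] at this
      intro h; rw [sub_eq_zero] at h; rw [← h] at h1; exact lt_irrefl _ h1
    exact HasDerivAt.of_local_left_inverse e.symm.continuous.continuousAt hdg hne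
      (Eventually.of_forall fun y => e.apply_symm_apply y)
  · intro s hs
    have hgs : g s = s - c * Real.log s := by
      simp only [hgdef, hclamp_id s ⟨hs.1.le, by linarith [hs.2]⟩]
    rw [← hgs]
    exact StrictMono.orderIsoOfSurjective_symm_apply_self g hsm hsurj s
/-- the implicitly defined `s₁(s₀,i₀)` is differentiable in each
variable with the stated partial derivatives. -/
theorem s1_partial_derivatives
    (β γ istar : ℝ) (hγ : 0 < γ) (hγβ : γ < β) (histar : istar ∈ Ioo (0:ℝ) 1)
    (s₁ : ℝ → ℝ → ℝ) (U : Set (ℝ × ℝ)) (hU : IsOpen U)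
    (hdom : ∀ p ∈ U, 0 < p.1 ∧ 0 < p.2 ∧ p.2 ≤ istar)
    (hbr : ∀ p ∈ U, γ / β < s₁ p.1 p.2)
    (heq : ∀ p ∈ U,
      s₁ p.1 p.2 - p.1 - p.2 + istar - (γ / β) * Real.log (s₁ p.1 p.2 / p.1) = 0) :
    ∀ p ∈ U,
      HasDerivAt (fun x => s₁ x p.2)
        ((β * p.1 - γ) * s₁ p.1 p.2 / ((β * s₁ p.1 p.2 - γ) * p.1)) p.1 ∧
      HasDerivAt (fun y => s₁ p.1 y)
        (β * s₁ p.1 p.2 / (β * s₁ p.1 p.2 - γ)) p.2 := by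
  have hβ : (0:ℝ) < β := hγ.trans hγβ
  set c : ℝ := γ / β with hcdef
  have hc : 0 < c := div_pos hγ hβ
  -- the implicit equation, rewritten
  have gkey : ∀ q ∈ U, s₁ q.1 q.2 - c * Real.log (s₁ q.1 q.2)
      = q.1 + q.2 - istar - c * Real.log q.1 := by
    intro q hq
    have h0 := heq q hq
    have hq1 : 0 < q.1 := (hdom q hq).1
    have hspos : 0 < s₁ q.1 q.2 := hc.trans (hbr q hq)
    rw [Real.log_div (ne_of_gt hspos) (ne_of_gt hq1), mul_sub] at h0
    linarith
  intro p hp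
  obtain ⟨hs₀, hi₀, -⟩ := hdom p hp
  set M : ℝ := s₁ p.1 p.2 with hMdef
  have hM : c < M := hbr p hp
  have hMpos : 0 < M := hc.trans hM
  have hβM : γ < β * M := by
    have := (div_lt_iff₀ hβ).mp hM
    linarith
  obtain ⟨G, hGc, hGd, hGinv⟩ := inverse_exists c hc M hM
  set B : ℝ := (M + 1) - c * Real.log (M + 1) with hBdef
  have keyG : ∀ q ∈ U, q.1 + q.2 - istar - c * Real.log q.1 < B →
      G (q.1 + q.2 - istar - c * Real.log q.1) = s₁ q.1 q.2 := by
    intro q hq hlt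
    have hg := gkey q hq
    have hs : s₁ q.1 q.2 ≤ M + 1 := by
      by_contra hcon
      push_neg at hcon
      have h2 := gfun_strictMonoOn c hc (show (M + 1) ∈ Ici c by
          simp only [mem_Ici]; linarith)
        (show s₁ q.1 q.2 ∈ Ici c from (hbr q hq).le) hcon
      simp only at h2
      rw [hg] at h2
      simp only [hBdef] at hlt
      linarith
    rw [← hg]
    exact hGinv _ ⟨hbr q hq, hs⟩
  have hBgt : M - c * Real.log M < B := by
    have := gfun_strictMonoOn c hc (show M ∈ Ici c from hM.le)
      (show (M + 1) ∈ Ici c by simp only [mem_Ici]; linarith)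
      (by linarith : M < M + 1)
    simpa [hBdef] using this
  have hkeyp : p.1 + p.2 - istar - c * Real.log p.1 = M - c * Real.log M :=
    (gkey p hp).symm
  have hd' : (1 : ℝ) - c * M⁻¹ ≠ 0 := by
    have h1 : c * M⁻¹ < 1 := by
      have := (div_lt_one hMpos).mpr hM
      rwa [div_eq_mul_inv] at this
    intro h; rw [sub_eq_zero] at h; rw [← h] at h1; exact lt_irrefl _ h1
  have hβMne : β * M - γ ≠ 0 := by intro h; rw [sub_eq_zero] at h; exact absurd h.symm (ne_of_lt hβM)
  constructor
  · -- derivative in the first variable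
    have hUe : ∀ᶠ x in nhds p.1, (x, p.2) ∈ U := by
      have hpc : ContinuousAt (fun x : ℝ => (x, p.2)) p.1 :=
        (continuous_id.prodMk continuous_const).continuousAt
      exact hpc.preimage_mem_nhds (hU.mem_nhds (by simpa using hp))
    set h1 : ℝ → ℝ := fun x => x + p.2 - istar - c * Real.log x with h1def
    have hh1d : HasDerivAt h1 (1 - c * p.1⁻¹) p.1 := by
      have hbase : HasDerivAt (fun x : ℝ => (x + (p.2 - istar)) - c * Real.log x)
          (1 - c * p.1⁻¹) p.1 :=
        ((hasDerivAt_id p.1).add_const (p.2 - istar)).sub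
          ((Real.hasDerivAt_log (ne_of_gt hs₀)).const_mul c)
      exact hbase.congr_of_eventuallyEq (Eventually.of_forall fun x => by
        simp only [h1def]; ring)
    have hh1p : h1 p.1 = M - c * Real.log M := hkeyp
    have hlt : ∀ᶠ x in nhds p.1, h1 x < B := by
      have : Tendsto h1 (nhds p.1) (nhds (h1 p.1)) := hh1d.continuousAt
      rw [hh1p] at this
      exact this.eventually_lt_const hBgt
    have hEq : (fun x => s₁ x p.2) =ᶠ[nhds p.1] fun x => G (h1 x) := by
      filter_upwards [hUe, hlt] with x hxU hxlt
      exact (keyG (x, p.2) hxU hxlt).symm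
    have hGd' : HasDerivAt G (1 - c * M⁻¹)⁻¹ (h1 p.1) := by rw [hh1p]; exact hGd
    have hcomp : HasDerivAt (fun x => G (h1 x)) ((1 - c * M⁻¹)⁻¹ * (1 - c * p.1⁻¹)) p.1 :=
      hGd'.comp p.1 hh1d
    have := hcomp.congr_of_eventuallyEq hEq
    refine this.congr_deriv ?_
    rw [hcdef]
    field_simp
  · -- derivative in the second variable
    have hUe : ∀ᶠ y in nhds p.2, (p.1, y) ∈ U := by
      have hpc : ContinuousAt (fun y : ℝ => (p.1, y)) p.2 :=
        (continuous_const.prodMk continuous_id).continuousAt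
      exact hpc.preimage_mem_nhds (hU.mem_nhds (by simpa using hp))
    set h2 : ℝ → ℝ := fun y => p.1 + y - istar - c * Real.log p.1 with h2def
    have hh2d : HasDerivAt h2 1 p.2 := by
      have hbase : HasDerivAt (fun y : ℝ => y + (p.1 - istar - c * Real.log p.1)) 1 p.2 :=
        (hasDerivAt_id p.2).add_const _
      exact hbase.congr_of_eventuallyEq (Eventually.of_forall fun y => by
        simp only [h2def]; ring)
    have hh2p : h2 p.2 = M - c * Real.log M := hkeyp
    have hlt : ∀ᶠ y in nhds p.2, h2 y < B := by
      have : Tendsto h2 (nhds p.2) (nhds (h2 p.2)) := hh2d.continuousAt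
      rw [hh2p] at this
      exact this.eventually_lt_const hBgt
    have hEq : (fun y => s₁ p.1 y) =ᶠ[nhds p.2] fun y => G (h2 y) := by
      filter_upwards [hUe, hlt] with y hyU hylt
      exact (keyG (p.1, y) hyU hylt).symm
    have hGd' : HasDerivAt G (1 - c * M⁻¹)⁻¹ (h2 p.2) := by rw [hh2p]; exact hGd
    have hcomp : HasDerivAt (fun y => G (h2 y)) ((1 - c * M⁻¹)⁻¹ * 1) p.2 :=
      hGd'.comp p.2 hh2d
    have := hcomp.congr_of_eventuallyEq hEq
    refine this.congr_deriv ?_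
    rw [hcdef]
    field_simp
end

section
/- Let c > 0 and let φ : (0, i*] → (c', ∞) (with c' = γ/β < the relevant range) satisfy the implicit relation -φ(i) + (γ/β) log φ(i) = i + K for a constant K, with φ(i) > γ/β. Suppose (s(t), i(t)) solves the SIR system with measurable control a(t) ∈ [0, ā] and i(t) > 0, and s₀ ≤ φ(i₀). Then s(t) ≤ φ(i(t)) for all t ≥ 0 in the interval of definition (forward invariance of the region below the curve). -/
open Set

open Filter Topology


lemma sq_posPart_hasDerivAt (x : ℝ) :
    HasDerivAt (fun y : ℝ => max y 0 ^ 2) (2 * max x 0) x := by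
  rcases lt_trichotomy x 0 with hx | hx | hx
  · have hev : (fun y : ℝ => max y 0 ^ 2) =ᶠ[𝓝 x] fun _ => (0:ℝ) := by
      filter_upwards [eventually_lt_nhds hx] with y hy
      simp [max_eq_right hy.le]
    have : HasDerivAt (fun _ : ℝ => (0:ℝ)) 0 x := hasDerivAt_const x 0
    have h2 := hev.hasDerivAt_iff.mpr this
    simpa [max_eq_right hx.le] using h2
  · subst hx
    rw [hasDerivAt_iff_tendsto_slope]
    simp only [max_self, max_eq_right le_rfl, mul_zero]
    have hb : ∀ᶠ y in 𝓝[≠] (0:ℝ), ‖slope (fun y : ℝ => max y 0 ^ 2) 0 y‖ ≤ |y| := by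
      filter_upwards [self_mem_nhdsWithin] with y (hy : y ≠ 0)
      have h1 : max y 0 ^ 2 ≤ y ^ 2 := by
        rcases le_or_gt y 0 with h | h
        · simpa [max_eq_right h] using sq_nonneg y
        · simp [max_eq_left h.le]
      have : |slope (fun y : ℝ => max y 0 ^ 2) 0 y| = max y 0 ^ 2 / |y| := by
        rw [slope_def_field]
        simp [div_eq_mul_inv, abs_mul, abs_of_nonneg (sq_nonneg (max y 0)), abs_inv]
      rw [Real.norm_eq_abs, this]
      rw [div_le_iff₀ (abs_pos.2 hy)]
      calc max y 0 ^ 2 ≤ y ^ 2 := h1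
        _ = |y| * |y| := by rw [sq]; exact (abs_mul_abs_self y).symm
    have hy0 : Tendsto (fun y : ℝ => |y|) (𝓝[≠] (0:ℝ)) (𝓝 0) := by
      have h := (continuous_abs.tendsto (0:ℝ)).mono_left (nhdsWithin_le_nhds (s := {(0:ℝ)}ᶜ))
      simpa using h
    exact squeeze_zero_norm' hb hy0
  · have hev : (fun y : ℝ => max y 0 ^ 2) =ᶠ[𝓝 x] fun y => y ^ 2 := by
      filter_upwards [eventually_gt_nhds hx] with y hy
      simp [max_eq_left hy.le]
    have h2 := hev.hasDerivAt_iff.mpr (hasDerivAt_pow 2 x)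
    simpa [max_eq_left hx.le, mul_comm] using h2

/-- forward invariance of the region below the curve `s = φ(i)`
(with `-φ(i) + (γ/β) log φ(i) = i + K`, `φ(i) > γ/β`) for the controlled SIR
system. -/
theorem below_curve_invariant
    (β γ abar T K : ℝ) (hγ : 0 < γ) (hγβ : γ < β) (habar : abar ∈ Ioo (0:ℝ) 1)
    (hT : 0 ≤ T)
    (a s i φ : ℝ → ℝ) (ha_meas : Measurable a) (ha : ∀ t, a t ∈ Icc (0:ℝ) abar)
    (hs : ∀ t ∈ Icc (0:ℝ) T, HasDerivAt s (-(β * (1 - a t) * s t * i t)) t)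
    (hi : ∀ t ∈ Icc (0:ℝ) T, HasDerivAt i ((β * (1 - a t) * s t - γ) * i t) t)
    (hipos : ∀ t ∈ Icc (0:ℝ) T, 0 < i t)
    (hφ : ∀ t ∈ Icc (0:ℝ) T,
      γ / β < φ (i t) ∧ -φ (i t) + (γ / β) * Real.log (φ (i t)) = i t + K)
    (h0 : s 0 ≤ φ (i 0)) :
    ∀ t ∈ Icc (0:ℝ) T, s t ≤ φ (i t) := by
  have hβ : 0 < β := hγ.trans hγβ
  set c : ℝ := γ / β with hc
  have hcpos : 0 < c := div_pos hγ hβ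
  set F : ℝ → ℝ := fun x => c * Real.log x - x with hFdef
  set ψ : ℝ → ℝ := fun t => φ (i t) with hψdef
  have hψc : ∀ t ∈ Icc (0:ℝ) T, c < ψ t := fun t ht => (hφ t ht).1
  have hψ0 : ∀ t ∈ Icc (0:ℝ) T, 0 < ψ t := fun t ht => hcpos.trans (hψc t ht)
  have hrel : ∀ t ∈ Icc (0:ℝ) T, F (ψ t) = i t + K := by
    intro t ht
    have := (hφ t ht).2
    simp only [hFdef]
    linarith
  -- strict derivative of F
  have hF : ∀ x : ℝ, 0 < x → HasStrictDerivAt F (c * x⁻¹ - 1) x := by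
    intro x hx
    exact ((Real.hasStrictDerivAt_log hx.ne').const_mul c).sub (hasStrictDerivAt_id x)
  -- F is strictly antitone on [c, ∞)
  have hanti : StrictAntiOn F (Ici c) := by
    apply strictAntiOn_of_deriv_neg (convex_Ici c)
    · intro x hx
      exact (hF x (hcpos.trans_le hx)).hasDerivAt.continuousAt.continuousWithinAt
    · intro x hx
      rw [interior_Ici] at hx
      have hx0 : 0 < x := hcpos.trans hx
      rw [(hF x hx0).hasDerivAt.deriv]
      have : c * x⁻¹ < 1 := by
        rw [← div_eq_mul_inv, div_lt_one hx0]
        exact hx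
      linarith
  -- continuity of i, s on the interval
  have hicont : ContinuousOn i (Icc 0 T) := fun t ht => (hi t ht).continuousAt.continuousWithinAt
  have hscont : ContinuousOn s (Icc 0 T) := fun t ht => (hs t ht).continuousAt.continuousWithinAt
  -- continuity of ψ on the interval
  have hψcont : ContinuousOn ψ (Icc 0 T) := by
    intro t₀ ht₀
    rw [Metric.continuousWithinAt_iff]
    intro ε hε
    set P := ψ t₀ with hPdef
    have hPc : c < P := hψc t₀ ht₀
    set ε' : ℝ := min (ε / 2) ((P - c) / 2) with hε'def
    have hε' : 0 < ε' := lt_min (by linarith) (by linarith)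
    have hε'ε : ε' < ε := (min_le_left _ _).trans_lt (by linarith)
    have haP : c < P - ε' := by
      have : ε' ≤ (P - c) / 2 := min_le_right _ _
      linarith
    have hFa : F P < F (P - ε') := hanti haP.le (hPc.le) (by linarith)
    have hFb : F (P + ε') < F P := hanti hPc.le (by linarith : c ≤ P + ε') (by linarith)
    set δ' : ℝ := min (F (P - ε') - F P) (F P - F (P + ε')) with hδ'def
    have hδ'pos : 0 < δ' := lt_min (by linarith) (by linarith)
    have hicw := hicont t₀ ht₀
    rw [Metric.continuousWithinAt_iff] at hicw
    obtain ⟨δ, hδpos, hδ⟩ := hicw δ' hδ'pos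
    refine ⟨δ, hδpos, fun {t} ht hdist => ?_⟩
    have hit := hδ ht hdist
    rw [Real.dist_eq, abs_lt] at hit
    have hFt : F (ψ t) = i t + K := hrel t ht
    have hFt₀ : F P = i t₀ + K := hrel t₀ ht₀
    have h1 : F (P + ε') < F (ψ t) := by
      have : δ' ≤ F P - F (P + ε') := min_le_right _ _
      rw [hFt, hFt₀] at *
      linarith
    have h2 : F (ψ t) < F (P - ε') := by
      have : δ' ≤ F (P - ε') - F P := min_le_left _ _
      rw [hFt, hFt₀] at *
      linarith
    have hψtc : c < ψ t := hψc t ht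
    have hlow : P - ε' < ψ t := by
      by_contra hcon
      push_neg at hcon
      rcases hcon.lt_or_eq with hlt | heq
      · have := hanti (le_of_lt hψtc) haP.le hlt
        linarith
      · rw [heq] at h2
        exact lt_irrefl _ h2
    have hhigh : ψ t < P + ε' := by
      by_contra hcon
      push_neg at hcon
      rcases hcon.lt_or_eq with hlt | heq
      · have := hanti (by linarith : c ≤ P + ε') (le_of_lt hψtc) hlt
        linarith
      · rw [← heq] at h1
        exact lt_irrefl _ h1
    rw [Real.dist_eq, abs_lt]
    constructor <;> [skip; skip] <;> simp only [hPdef] at * <;> linarith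
  -- bound C
  obtain ⟨C, hC⟩ : ∃ C : ℝ, ∀ t ∈ Icc (0:ℝ) T,
      2 * (β * γ * i t / (β * ψ t - γ)) ≤ C := by
    have hcontlam : ContinuousOn (fun t => 2 * (β * γ * i t / (β * ψ t - γ))) (Icc 0 T) := by
      apply ContinuousOn.mul continuousOn_const
      apply ContinuousOn.div (continuousOn_const.mul hicont)
        ((continuousOn_const.mul hψcont).sub continuousOn_const)
      intro t ht
      have := hψc t ht
      have : γ < β * ψ t := by
        rw [hc] at this
        calc γ = β * (γ / β) := by field_simp
          _ < β * ψ t := by exact mul_lt_mul_of_pos_left this hβ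
      change β * ψ t - γ ≠ 0
      linarith
    obtain ⟨t₁, ht₁, hmax⟩ := isCompact_Icc.exists_isMaxOn (nonempty_Icc.mpr hT) hcontlam
    exact ⟨_, fun t ht => hmax ht⟩
  -- g and h
  set g : ℝ → ℝ := fun t => s t - ψ t with hgdef
  have hgcont : ContinuousOn g (Icc 0 T) := hscont.sub hψcont
  -- derivative of ψ at interior points
  have hψderiv : ∀ t₀ ∈ Ioo (0:ℝ) T,
      HasDerivAt ψ ((c * (ψ t₀)⁻¹ - 1)⁻¹ * ((β * (1 - a t₀) * s t₀ - γ) * i t₀)) t₀ := by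
    intro t₀ ht₀
    have ht₀' : t₀ ∈ Icc (0:ℝ) T := Ioo_subset_Icc_self ht₀
    have hnhds : Icc (0:ℝ) T ∈ 𝓝 t₀ := Icc_mem_nhds ht₀.1 ht₀.2
    set x₀ : ℝ := ψ t₀ with hx₀def
    have hx₀c : c < x₀ := hψc t₀ ht₀'
    have hx₀0 : 0 < x₀ := hcpos.trans hx₀c
    have hF'ne : c * x₀⁻¹ - 1 ≠ 0 := by
      have : c * x₀⁻¹ < 1 := by
        rw [← div_eq_mul_inv, div_lt_one hx₀0]
        exact hx₀c
      linarith
    have hFs : HasStrictDerivAt F (c * x₀⁻¹ - 1) x₀ := hF x₀ hx₀0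
    set G : ℝ → ℝ := hFs.localInverse F _ x₀ hF'ne with hGdef
    have hGd : HasDerivAt G (c * x₀⁻¹ - 1)⁻¹ (F x₀) := (hFs.to_localInverse hF'ne).hasDerivAt
    have hψca : ContinuousAt ψ t₀ := (hψcont t₀ ht₀').continuousAt hnhds
    have hev1 : ∀ᶠ x in 𝓝 x₀, G (F x) = x :=
      (hFs.hasStrictFDerivAt_equiv hF'ne).eventually_left_inverse
    have hev2 : ∀ᶠ t in 𝓝 t₀, G (F (ψ t)) = ψ t := hψca.eventually hev1
    have hev3 : ∀ᶠ t in 𝓝 t₀, F (ψ t) = i t + K :=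
      eventually_of_mem hnhds (fun t ht => hrel t ht)
    have hev : ψ =ᶠ[𝓝 t₀] fun t => G (i t + K) := by
      filter_upwards [hev2, hev3] with t h2 h3
      rw [← h3, h2]
    have hu : HasDerivAt (fun t => i t + K) ((β * (1 - a t₀) * s t₀ - γ) * i t₀) t₀ :=
      (hi t₀ ht₀').add_const K
    have hGd' : HasDerivAt G (c * x₀⁻¹ - 1)⁻¹ (i t₀ + K) := by
      rwa [hrel t₀ ht₀'] at hGd
    have hcomp : HasDerivAt (fun t => G (i t + K))
        ((c * x₀⁻¹ - 1)⁻¹ * ((β * (1 - a t₀) * s t₀ - γ) * i t₀)) t₀ :=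
      HasDerivAt.comp t₀ hGd' hu
    exact hev.hasDerivAt_iff.mpr hcomp
  -- key derivative inequality for h at interior points
  have hkey : ∀ t₀ ∈ Ioo (0:ℝ) T,
      HasDerivAt (fun t => max (g t) 0 ^ 2)
        (2 * max (g t₀) 0 * (-(β * (1 - a t₀) * s t₀ * i t₀)
          - (c * (ψ t₀)⁻¹ - 1)⁻¹ * ((β * (1 - a t₀) * s t₀ - γ) * i t₀))) t₀ ∧
      2 * max (g t₀) 0 * (-(β * (1 - a t₀) * s t₀ * i t₀)
          - (c * (ψ t₀)⁻¹ - 1)⁻¹ * ((β * (1 - a t₀) * s t₀ - γ) * i t₀))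
        ≤ C * (max (g t₀) 0 ^ 2) := by
    intro t₀ ht₀
    have ht₀' : t₀ ∈ Icc (0:ℝ) T := Ioo_subset_Icc_self ht₀
    have hgd : HasDerivAt g (-(β * (1 - a t₀) * s t₀ * i t₀)
        - (c * (ψ t₀)⁻¹ - 1)⁻¹ * ((β * (1 - a t₀) * s t₀ - γ) * i t₀)) t₀ :=
      (hs t₀ ht₀').sub (hψderiv t₀ ht₀)
    refine ⟨(sq_posPart_hasDerivAt (g t₀)).comp t₀ hgd, ?_⟩
    rcases le_or_gt (g t₀) 0 with hg | hg
    · simp [max_eq_right hg]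
    · rw [max_eq_left hg.le]
      set P : ℝ := ψ t₀ with hPdef
      set S : ℝ := s t₀ with hSdef
      set I : ℝ := i t₀ with hIdef
      set A : ℝ := a t₀ with hAdef
      have hPc : c < P := hψc t₀ ht₀'
      have hP0 : 0 < P := hcpos.trans hPc
      have hI : 0 < I := hipos t₀ ht₀'
      have hA0 : 0 ≤ A := (ha t₀).1
      have hβPγ : γ < β * P := by
        rw [hc] at hPc
        calc γ = β * (γ / β) := by field_simp
          _ < β * P := mul_lt_mul_of_pos_left hPc hβ
      have hDne : β * P - γ ≠ 0 := by linarith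
      have hD2ne : γ - β * P ≠ 0 := by linarith
      have hgS : g t₀ = S - P := rfl
      have key1 : (-(β * (1 - A) * S * I) - (c * P⁻¹ - 1)⁻¹ * ((β * (1 - A) * S - γ) * I))
          - (β * γ * I / (β * P - γ)) * (S - P) = -(β * γ * I * A * S) / (β * P - γ) := by
        have e0 : c * P⁻¹ - 1 = (γ - β * P) / (β * P) := by
          rw [hc]
          field_simp
        rw [e0, inv_div]
        field_simp
        ring
      have hS0 : 0 < S := by
        have : P < S := by rw [hgS] at hg; linarith
        linarith
      have key2 : (-(β * (1 - A) * S * I) - (c * P⁻¹ - 1)⁻¹ * ((β * (1 - A) * S - γ) * I))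
          ≤ (β * γ * I / (β * P - γ)) * (S - P) := by
        have hnum : 0 ≤ β * γ * I * A * S := by positivity
        have : -(β * γ * I * A * S) / (β * P - γ) ≤ 0 := by
          apply div_nonpos_of_nonpos_of_nonneg <;> linarith
        linarith [key1]
      have hlam : 2 * (β * γ * I / (β * P - γ)) ≤ C := hC t₀ ht₀'
      have h1 := mul_le_mul_of_nonneg_left key2 (by linarith : (0:ℝ) ≤ 2 * g t₀)
      have h2 := mul_le_mul_of_nonneg_right hlam (sq_nonneg (g t₀))
      rw [hgS] at h1 h2 ⊢
      nlinarith [h1, h2]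
  -- Gronwall-type conclusion
  have hed : ∀ t : ℝ, HasDerivAt (fun t => Real.exp (-C * t)) (Real.exp (-C * t) * (-C)) t := by
    intro t
    simpa using ((hasDerivAt_id t).const_mul (-C)).exp
  set v : ℝ → ℝ := fun t => max (g t) 0 ^ 2 * Real.exp (-C * t) with hvdef
  have hvd : ∀ t₀ ∈ Ioo (0:ℝ) T, HasDerivAt v
      ((2 * max (g t₀) 0 * (-(β * (1 - a t₀) * s t₀ * i t₀)
          - (c * (ψ t₀)⁻¹ - 1)⁻¹ * ((β * (1 - a t₀) * s t₀ - γ) * i t₀))) * Real.exp (-C * t₀)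
        + max (g t₀) 0 ^ 2 * (Real.exp (-C * t₀) * (-C))) t₀ :=
    fun t₀ ht₀ => ((hkey t₀ ht₀).1).mul (hed t₀)
  have hvderiv_nonpos : ∀ t₀ ∈ Ioo (0:ℝ) T, deriv v t₀ ≤ 0 := by
    intro t₀ ht₀
    rw [(hvd t₀ ht₀).deriv]
    have hineq := (hkey t₀ ht₀).2
    have hexp := (Real.exp_pos (-C * t₀)).le
    nlinarith [mul_le_mul_of_nonneg_right hineq hexp]
  have hvcont : ContinuousOn v (Icc 0 T) := by
    apply ContinuousOn.mul
    · exact (hgcont.sup continuousOn_const).pow 2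
    · exact (Real.continuous_exp.comp (continuous_const.mul continuous_id)).continuousOn
  have hmono : AntitoneOn v (Icc 0 T) := by
    apply antitoneOn_of_deriv_nonpos (convex_Icc 0 T) hvcont
    · rw [interior_Icc]
      exact fun t ht => (hvd t ht).differentiableAt.differentiableWithinAt
    · rw [interior_Icc]
      exact hvderiv_nonpos
  intro t ht
  have hv : v t ≤ v 0 := hmono (left_mem_Icc.2 hT) ht ht.1
  have hv0 : v 0 = 0 := by
    have hg0 : g 0 ≤ 0 := by
      simp only [hgdef, hψdef]
      linarith
    simp [hvdef, max_eq_right hg0]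
  rw [hv0] at hv
  have hexp := Real.exp_pos (-C * t)
  have hmax : max (g t) 0 ^ 2 ≤ 0 := by
    by_contra hcon
    push_neg at hcon
    simp only [hvdef] at hv
    nlinarith [mul_pos hcon hexp]
  have : max (g t) 0 = 0 := by
    nlinarith [le_max_right (g t) 0, hmax]
  have hgle : g t ≤ 0 := by
    have := le_max_left (g t) 0
    rw [‹max (g t) 0 = 0›] at this
    exact this
  simp only [hgdef, hψdef] at hgle
  linarith
end

section
/- Let ψ̃ be as above (the backward trajectory curve through (γ/β, i*) for control ā). For any measurable control a(t) ∈ [0, ā], if the backward trajectory (s(-t), i(-t)) of the SIR system starts at a point (ψ̃(i₀), i₀) with i₀ < i*, then s(-t) - ψ̃(i(-t)) is nondecreasing in t, hence stays nonnegative; i.e., the region {s ≥ ψ̃(i)} is backward invariant. -/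
open Set

/-- backward invariance of the region `{s ≥ ψ̃(i)}`: along any backward
trajectory of the controlled SIR system starting on the curve, `s(-t) - ψ̃(i(-t))` is
nondecreasing, hence stays nonnegative. -/
theorem backward_invariance_psi_tilde
    (β γ abar istar T : ℝ) (hγ : 0 < γ) (habar : abar ∈ Ioo (0:ℝ) 1)
    (hcond : γ < β * (1 - abar)) (histar : istar ∈ Ioo (0:ℝ) 1) (hT : 0 ≤ T)
    (ψt : ℝ → ℝ)
    (hψt : ∀ iv ∈ Ioc (0:ℝ) istar,
      0 < ψt iv ∧ ψt iv ≤ γ / β ∧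
      -ψt iv + (γ / (β * (1 - abar))) * Real.log (ψt iv)
        = iv - istar + (γ / (β * (1 - abar))) * Real.log (γ / β) - γ / β)
    (A S I : ℝ → ℝ) (hA_meas : Measurable A) (hA : ∀ t, A t ∈ Icc (0:ℝ) abar)
    (hS : ∀ t ∈ Icc (0:ℝ) T, HasDerivAt S (β * (1 - A t) * S t * I t) t)
    (hI : ∀ t ∈ Icc (0:ℝ) T, HasDerivAt I (-((β * (1 - A t) * S t - γ) * I t)) t)
    (hIrange : ∀ t ∈ Icc (0:ℝ) T, I t ∈ Ioc (0:ℝ) istar)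
    (hI0 : I 0 < istar) (h0 : S 0 = ψt (I 0)) :
    MonotoneOn (fun t => S t - ψt (I t)) (Icc (0:ℝ) T) ∧
    ∀ t ∈ Icc (0:ℝ) T, 0 ≤ S t - ψt (I t) := by
  have hab1 : 0 < 1 - abar := by linarith [habar.2]
  have hβab : 0 < β * (1 - abar) := lt_trans hγ hcond
  have hβ : 0 < β := by nlinarith
  set c : ℝ := γ / (β * (1 - abar)) with hc
  have hc0 : 0 < c := div_pos hγ hβab
  have hγβ0 : 0 < γ / β := div_pos hγ hβ
  have hγβc : γ / β < c := by
    rw [hc, div_lt_div_iff₀ hβ hβab]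
    nlinarith [mul_pos (mul_pos hγ hβ) habar.1]
  have hkey : β * (1 - abar) * c = γ := by
    rw [hc]; field_simp
  set F : ℝ → ℝ := fun x => -x + c * Real.log x with hFdef
  set u : ℝ → ℝ := fun t => I t - istar + c * Real.log (γ / β) - γ / β with hudef
  have hψG : ∀ iv ∈ Ioc (0:ℝ) istar,
      F (ψt iv) = iv - istar + c * Real.log (γ / β) - γ / β := fun iv hiv =>
    (hψt iv hiv).2.2
  clear_value c
  -- derivative of F
  have hFd : ∀ x : ℝ, 0 < x → HasStrictDerivAt F (-1 + c * x⁻¹) x := fun x hx =>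
    (hasStrictDerivAt_id x).neg.add
      (HasStrictDerivAt.const_mul c (Real.hasStrictDerivAt_log hx.ne'))
  have hFdpos : ∀ x : ℝ, 0 < x → x < c → 0 < -1 + c * x⁻¹ := by
    intro x hx hxc
    have h1 : x * x⁻¹ = 1 := mul_inv_cancel₀ hx.ne'
    have h2 : 0 < x⁻¹ := inv_pos.2 hx
    nlinarith
  -- F is strictly monotone on (0, c]
  have hFmono : StrictMonoOn F (Ioc (0:ℝ) c) := by
    apply strictMonoOn_of_deriv_pos (convex_Ioc 0 c)
    · exact fun x hx => ((hFd x hx.1).hasDerivAt.continuousAt).continuousWithinAt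
    · intro x hx
      rw [interior_Ioc] at hx
      rw [(hFd x hx.1).hasDerivAt.deriv]
      exact hFdpos x hx.1 hx.2
  -- membership of 0 in Icc 0 T
  have h0T : (0:ℝ) ∈ Icc (0:ℝ) T := ⟨le_refl 0, hT⟩
  have hS0 : 0 < S 0 := by rw [h0]; exact (hψt (I 0) (hIrange 0 h0T)).1
  have hScont : ContinuousOn S (Icc 0 T) := fun t ht =>
    (hS t ht).continuousAt.continuousWithinAt
  have hIcont : ContinuousOn I (Icc 0 T) := fun t ht =>
    (hI t ht).continuousAt.continuousWithinAt
  -- Stage 0: positivity of S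
  have hSpos : ∀ t ∈ Icc (0:ℝ) T, 0 < S t := by
    by_contra h
    push_neg at h
    obtain ⟨t1, ht1, hSt1⟩ := h
    have hsub : Icc (0:ℝ) t1 ⊆ Icc 0 T := Icc_subset_Icc le_rfl ht1.2
    obtain ⟨t2, ht2, hSt2⟩ := intermediate_value_Icc' ht1.1 (hScont.mono hsub)
      (⟨hSt1, hS0.le⟩ : (0:ℝ) ∈ Icc (S t1) (S 0))
    set f : ℝ → ℝ := fun x => S (t2 - x) with hfdef
    have ht2T : t2 ∈ Icc (0:ℝ) T := hsub ht2
    have hmem : ∀ x ∈ Icc (0:ℝ) t2, t2 - x ∈ Icc (0:ℝ) T := by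
      intro x hx
      exact ⟨by linarith [hx.2], by linarith [hx.1, ht2T.2]⟩
    have hfc : ContinuousOn f (Icc 0 t2) := fun x hx =>
      ((hS _ (hmem x hx)).continuousAt.comp
        (continuousAt_const.sub continuousAt_id)).continuousWithinAt
    have hfd : ∀ x ∈ Ico (0:ℝ) t2, HasDerivWithinAt f
        (-(β * (1 - A (t2 - x)) * S (t2 - x) * I (t2 - x))) (Ici x) x := by
      intro x hx
      have hx' : t2 - x ∈ Icc (0:ℝ) T := hmem x ⟨hx.1, hx.2.le⟩
      have hcomp := (hS _ hx').comp x ((hasDerivAt_id x).const_sub t2)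
      have : HasDerivAt f (-(β * (1 - A (t2 - x)) * S (t2 - x) * I (t2 - x))) x := by
        rw [mul_neg_one] at hcomp
        exact hcomp
      exact this.hasDerivWithinAt
    have hbound : ∀ x ∈ Ico (0:ℝ) t2,
        ‖-(β * (1 - A (t2 - x)) * S (t2 - x) * I (t2 - x))‖ ≤ β * ‖f x‖ + 0 := by
      intro x hx
      have hx' : t2 - x ∈ Icc (0:ℝ) T := hmem x ⟨hx.1, hx.2.le⟩
      have hAx := hA (t2 - x)
      have hIx := hIrange _ hx'
      have h1A : 0 < 1 - A (t2 - x) := by linarith [hAx.2]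
      rw [norm_neg, Real.norm_eq_abs, Real.norm_eq_abs, abs_mul, abs_mul, abs_mul,
        abs_of_pos hβ, abs_of_pos h1A, abs_of_pos hIx.1, add_zero]
      simp only [hfdef]
      have h1 : (1 - A (t2 - x)) * I (t2 - x) ≤ 1 := by
        have := mul_le_mul (by linarith [hAx.1] : 1 - A (t2 - x) ≤ 1) hIx.2 hIx.1.le zero_le_one
        linarith [histar.2]
      nlinarith [mul_le_mul_of_nonneg_left h1 (mul_nonneg hβ.le (abs_nonneg (S (t2 - x))))]
    have hfin := norm_le_gronwallBound_of_norm_deriv_right_le (δ := 0) hfc hfd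
      (by simp [hfdef, hSt2]) hbound t2 ⟨ht2.1, le_refl t2⟩
    rw [gronwallBound_ε0] at hfin
    simp only [hfdef, sub_self, zero_mul] at hfin
    rw [Real.norm_eq_abs] at hfin
    have := abs_nonneg (S 0)
    have : S 0 = 0 := by
      have := abs_eq_zero.1 (le_antisymm hfin (abs_nonneg _))
      exact this
    linarith
  -- Stage 1: W is monotone nondecreasing
  set W : ℝ → ℝ := fun t => F (S t) - u t with hWdef
  have hucont : ContinuousOn u (Icc (0:ℝ) T) := fun t ht =>
    (((hIcont t ht).sub continuousWithinAt_const).add continuousWithinAt_const).sub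
      continuousWithinAt_const
  have hu' : ∀ t ∈ Icc (0:ℝ) T, HasDerivAt u (-((β * (1 - A t) * S t - γ) * I t)) t :=
    fun t ht => (((hI t ht).sub_const istar).add_const _).sub_const _
  have hWmono : MonotoneOn W (Icc (0:ℝ) T) := by
    apply monotoneOn_of_hasDerivWithinAt_nonneg (convex_Icc 0 T)
      (f' := fun t => I t * (β * (1 - A t) * c - γ))
    · intro t ht
      exact (((hFd _ (hSpos t ht)).hasDerivAt.continuousAt.comp_continuousWithinAt
        (hScont t ht)).sub (hucont t ht))
    · intro t ht
      rw [interior_Icc] at ht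
      have ht' : t ∈ Icc (0:ℝ) T := Ioo_subset_Icc_self ht
      have hst := hSpos t ht'
      have hderF := (hFd _ hst).hasDerivAt.comp t (hS t ht')
      have hW' := hderF.sub (hu' t ht')
      have heq : (-1 + c * (S t)⁻¹) * (β * (1 - A t) * S t * I t)
          - -((β * (1 - A t) * S t - γ) * I t) = I t * (β * (1 - A t) * c - γ) := by
        field_simp
        ring
      rw [heq] at hW'
      exact hW'.hasDerivWithinAt
    · intro t ht
      rw [interior_Icc] at ht
      have hIx := hIrange t (Ioo_subset_Icc_self ht)
      have hfac : 0 ≤ β * (1 - A t) * c - γ := by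
        nlinarith [mul_nonneg (mul_pos hβ hc0).le (sub_nonneg.2 (hA t).2)]
      exact mul_nonneg hIx.1.le hfac
  have hW0 : W 0 = 0 := by
    simp only [hWdef, hudef]
    rw [h0, hψG (I 0) (hIrange 0 h0T)]
    ring
  have hWnn : ∀ t ∈ Icc (0:ℝ) T, 0 ≤ W t := by
    intro t ht
    rw [← hW0]
    exact hWmono h0T ht ht.1
  -- Stage 2: nonnegativity
  have hnn : ∀ t ∈ Icc (0:ℝ) T, ψt (I t) ≤ S t := by
    intro t ht
    obtain ⟨hp0, hpγβ, hpeq⟩ := hψt (I t) (hIrange t ht)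
    by_contra h
    push_neg at h
    have hSmem : S t ∈ Ioc (0:ℝ) c := ⟨hSpos t ht, le_of_lt (lt_of_lt_of_le h (hpγβ.trans hγβc.le))⟩
    have hpmem : ψt (I t) ∈ Ioc (0:ℝ) c := ⟨hp0, hpγβ.trans hγβc.le⟩
    have hlt : F (S t) < F (ψt (I t)) := hFmono hSmem hpmem h
    have : F (ψt (I t)) = u t := hpeq
    have hW := hWnn t ht
    rw [hWdef] at hW
    simp only at hW
    linarith
  -- Stage 3: continuity and differentiability of φ = ψt ∘ I along the trajectory
  set φ : ℝ → ℝ := fun t => ψt (I t) with hφdef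
  have key : ∀ t0 ∈ Icc (0:ℝ) T, ContinuousWithinAt φ (Icc 0 T) t0 ∧
      (t0 ∈ Ioo (0:ℝ) T → HasDerivAt φ
        ((-1 + c * (φ t0)⁻¹)⁻¹ * (-((β * (1 - A t0) * S t0 - γ) * I t0))) t0) := by
    intro t0 ht0
    obtain ⟨hx0p, hx0γβ, hx0eq⟩ := hψt (I t0) (hIrange t0 ht0)
    set x0 : ℝ := ψt (I t0) with hx0def
    have hx0c : x0 < c := lt_of_le_of_lt hx0γβ hγβc
    set d0 : ℝ := -1 + c * x0⁻¹ with hd0def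
    have hd0pos : 0 < d0 := hFdpos x0 hx0p hx0c
    have hFd0 : HasStrictDerivAt F d0 x0 := hFd x0 hx0p
    set g : ℝ → ℝ := hFd0.localInverse F d0 x0 hd0pos.ne' with hgdef
    have hfe := hFd0.hasStrictFDerivAt_equiv hd0pos.ne'
    have hginv : ∀ᶠ y in nhds (F x0), F (g y) = y := hfe.eventually_right_inverse
    have hgc : ContinuousAt g (F x0) := hfe.localInverse_continuousAt
    have hgx : g (F x0) = x0 := hfe.localInverse_apply_image
    have hufx : u t0 = F x0 := (hψG _ (hIrange t0 ht0)).symm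
    have huc : ContinuousWithinAt u (Icc 0 T) t0 := hucont t0 ht0
    have hginv' : ∀ᶠ y in nhds (u t0), F (g y) = y := by rw [hufx]; exact hginv
    have hgmem : ∀ᶠ y in nhds (u t0), g y ∈ Ioo (0:ℝ) c := by
      rw [hufx]
      exact hgc.eventually_mem (by rw [hgx]; exact isOpen_Ioo.mem_nhds ⟨hx0p, hx0c⟩)
    have hev : ∀ᶠ t in nhdsWithin t0 (Icc (0:ℝ) T), φ t = g (u t) := by
      filter_upwards [huc.eventually hginv', huc.eventually hgmem, self_mem_nhdsWithin]
        with t h1 h2 h3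
      obtain ⟨hp0, hpγβ, hpeq⟩ := hψt (I t) (hIrange t h3)
      have hFeq : F (φ t) = F (g (u t)) := by
        have h4 : F (φ t) = u t := hpeq
        rw [h4, h1]
      exact hFmono.injOn ⟨hp0, hpγβ.trans hγβc.le⟩ ⟨h2.1, h2.2.le⟩ hFeq
    have hφt0 : φ t0 = g (u t0) := by rw [hufx, hgx]
    have hguc : ContinuousWithinAt (fun t => g (u t)) (Icc 0 T) t0 := by
      apply ContinuousAt.comp_continuousWithinAt _ huc
      rw [hufx]; exact hgc
    constructor
    · exact hguc.congr_of_eventuallyEq hev hφt0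
    · intro hint
      have hmemN : Icc (0:ℝ) T ∈ nhds t0 := Icc_mem_nhds hint.1 hint.2
      have hev' : φ =ᶠ[nhds t0] fun t => g (u t) := by
        rwa [nhdsWithin_eq_nhds.mpr hmemN] at hev
      have hgd : HasDerivAt g d0⁻¹ (u t0) := by
        rw [hufx]; exact (hFd0.to_localInverse hd0pos.ne').hasDerivAt
      have hcomp := hgd.comp t0 (hu' t0 ht0)
      exact hcomp.congr_of_eventuallyEq hev'
  have hmonoD : MonotoneOn (fun t => S t - φ t) (Icc (0:ℝ) T) := by
    apply monotoneOn_of_hasDerivWithinAt_nonneg (convex_Icc 0 T)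
      (f' := fun t => β * (1 - A t) * S t * I t
        - (-1 + c * (φ t)⁻¹)⁻¹ * (-((β * (1 - A t) * S t - γ) * I t)))
    · intro t ht
      exact (hScont t ht).sub (key t ht).1
    · intro t ht
      rw [interior_Icc] at ht
      have ht' := Ioo_subset_Icc_self ht
      exact ((hS t ht').sub ((key t ht').2 ht)).hasDerivWithinAt
    · intro t ht
      rw [interior_Icc] at ht
      have ht' := Ioo_subset_Icc_self ht
      show (0:ℝ) ≤ β * (1 - A t) * S t * I t
        - (-1 + c * (ψt (I t))⁻¹)⁻¹ * (-((β * (1 - A t) * S t - γ) * I t))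
      obtain ⟨hp0, hpγβ, hpeq⟩ := hψt (I t) (hIrange t ht')
      have hsp : ψt (I t) ≤ S t := hnn t ht'
      set p := ψt (I t) with hpdef
      set d0 := -1 + c * p⁻¹ with hd0def
      have hd0pos : 0 < d0 := hFdpos p hp0 (lt_of_le_of_lt hpγβ hγβc)
      have hs := hSpos t ht'
      clear_value p
      clear_value d0
      have hIx := hIrange t ht'
      have hAx := hA t
      have h1A : (0:ℝ) ≤ 1 - A t := by linarith [hAx.2]
      have h1 : γ ≤ β * (1 - A t) * c := by
        nlinarith [mul_nonneg (mul_pos hβ hc0).le (sub_nonneg.2 hAx.2)]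
      have hfac : 0 ≤ I t * (β * (1 - A t) * S t * c - γ * p) := by
        nlinarith [mul_nonneg (mul_nonneg (mul_nonneg hβ.le h1A) hc0.le) (sub_nonneg.2 hsp),
          mul_nonneg hp0.le (sub_nonneg.2 h1), hIx.1]
      have hd0p : (0:ℝ) < d0 * p := mul_pos hd0pos hp0
      have hdp : d0 * p = c - p := by
        rw [hd0def]
        have h5 : p⁻¹ * p = 1 := inv_mul_cancel₀ hp0.ne'
        linear_combination c * h5
      have hinv : d0⁻¹ * d0 = 1 := inv_mul_cancel₀ hd0pos.ne'
      have heq : β * (1 - A t) * S t * I t - d0⁻¹ * (-((β * (1 - A t) * S t - γ) * I t))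
          = I t * (β * (1 - A t) * S t * c - γ * p) / (d0 * p) := by
        rw [eq_div_iff hd0p.ne']
        linear_combination (β * (1 - A t) * S t * I t) * hdp
          + ((β * (1 - A t) * S t - γ) * I t * p) * hinv
      have hfinal : (0:ℝ) ≤ β * (1 - A t) * S t * I t
          - d0⁻¹ * (-((β * (1 - A t) * S t - γ) * I t)) := by
        rw [heq]
        exact div_nonneg hfac hd0p.le
      exact hfinal
  exact ⟨hmonoD, fun t ht => sub_nonneg.2 (hnn t ht)⟩
end

section
/- With maximal control ā, at any boundary point (φ̄(i), i) with i ∈ (0, i*) of the set B^s̄ (where φ̄ = φ^{s̄} satisfies φ̄'(i) = βφ̄(i)/(γ - βφ̄(i)) and φ̄(i) > γ/β), the inner product of the vector field (-β(1-ā)s i, (β(1-ā)s - γ)i) with the outward normal (1, -φ̄'(i))/√(1+φ̄'(i)²) equals (1/√(1+|φ̄'(i)|²)) · āγi · βφ̄(i)/(γ - βφ̄(i)), which is strictly negative (inward pointing). -/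
open Set

/-- with maximal control `ā`, the vector field is strictly inward
pointing along the curved part of the boundary of `B^s̄`. -/
theorem inward_pointing_max_control
    (β γ abar istar : ℝ) (hγ : 0 < γ) (habar : abar ∈ Ioo (0:ℝ) 1)
    (hcond : γ < β * (1 - abar)) (histar : istar ∈ Ioo (0:ℝ) 1)
    (φb : ℝ → ℝ)
    (hφb : ∀ iv ∈ Ioo (0:ℝ) istar, γ / β < φb iv)
    (hφb' : ∀ iv ∈ Ioo (0:ℝ) istar,
      HasDerivAt φb (β * φb iv / (γ - β * φb iv)) iv) :
    ∀ iv ∈ Ioo (0:ℝ) istar,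
      (1 / Real.sqrt (1 + (β * φb iv / (γ - β * φb iv))^2)) *
          ((-(β * (1 - abar) * φb iv * iv)) * 1 +
            ((β * (1 - abar) * φb iv - γ) * iv) * (-(β * φb iv / (γ - β * φb iv))))
        = (1 / Real.sqrt (1 + (β * φb iv / (γ - β * φb iv))^2)) *
            (abar * γ * iv * (β * φb iv / (γ - β * φb iv))) ∧
      (1 / Real.sqrt (1 + (β * φb iv / (γ - β * φb iv))^2)) *
          (abar * γ * iv * (β * φb iv / (γ - β * φb iv))) < 0 := by
  intro iv hiv
  have hβ : 0 < β := by nlinarith [habar.1, habar.2]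
  have hφ := hφb iv hiv
  have hφpos : 0 < φb iv := lt_trans (div_pos hγ hβ) hφ
  have hden : γ - β * φb iv < 0 := by
    have := (div_lt_iff₀ hβ).mp hφ
    linarith [mul_comm β (φb iv)]
  have hdenne : γ - β * φb iv ≠ 0 := ne_of_lt hden
  have hsqrt : 0 < Real.sqrt (1 + (β * φb iv / (γ - β * φb iv))^2) :=
    Real.sqrt_pos.mpr (by positivity)
  constructor
  · congr 1
    field_simp
    ring
  · have hfrac : β * φb iv / (γ - β * φb iv) < 0 :=
      div_neg_of_pos_of_neg (by positivity) hden
    have h1 : 0 < abar * γ * iv := by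
      have := hiv.1; have := habar.1; positivity
    have : abar * γ * iv * (β * φb iv / (γ - β * φb iv)) < 0 :=
      mul_neg_of_pos_of_neg h1 hfrac
    exact mul_neg_of_pos_of_neg (by positivity) this
end
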